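/- If ρ : A → B and σ : B → C are strict completely positive maps between C*-algebras, then the composition σ ∘ ρ : A → C is a strict completely positive map. -/

import Mathlib

noncomputable section

open Filter Topology

universe u

/-- A bundled right Hilbert C*-module structure over a (possibly non-unital)
C*-algebra `B` on a complete normed complex vector space `X`.  The fields record
the right `B`-action, the `B`-valued inner product, and their standard axioms,
including positivity of inner products and compatibility of the norm. -/
structure HilbertModule (B : Type u) (X : Type u)
    [NonUnitalCStarAlgebra B] [NormedAddCommGroup X] [NormedSpace ℂ X] [CompleteSpace X] :
    Type u where
  smulR : X → B → X
  inner : X → X → B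
  smulR_add : ∀ (x : X) (b c : B), smulR x (b + c) = smulR x b + smulR x c
  add_smulR : ∀ (x y : X) (b : B), smulR (x + y) b = smulR x b + smulR y b
  smulR_mul : ∀ (x : X) (b c : B), smulR x (b * c) = smulR (smulR x b) c
  smulC_smulR : ∀ (c : ℂ) (x : X) (b : B), smulR (c • x) b = c • smulR x b
  inner_add_left : ∀ x y z : X, inner (x + y) z = inner x z + inner y z
  inner_add_right : ∀ x y z : X, inner x (y + z) = inner x y + inner x z
  inner_smulR_right : ∀ (x y : X) (b : B), inner x (smulR y b) = inner x y * b
  inner_smulC_right : ∀ (c : ℂ) (x y : X), inner x (c • y) = c • inner x y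
  star_inner : ∀ x y : X, star (inner x y) = inner y x
  inner_self_pos : ∀ x : X, ∃ b : B, inner x x = star b * b
  norm_inner_self : ∀ x : X, ‖x‖ ^ 2 = ‖inner x x‖

/-- `T : X → Y` and `S : Y → X` are mutually adjoint operators between
right Hilbert `B`-modules. -/
def HilbertModule.IsAdjointPair {B X Y : Type u} [NonUnitalCStarAlgebra B]
    [NormedAddCommGroup X] [NormedSpace ℂ X] [CompleteSpace X]
    [NormedAddCommGroup Y] [NormedSpace ℂ Y] [CompleteSpace Y]
    (hX : HilbertModule B X) (hY : HilbertModule B Y)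
    (T : X → Y) (S : Y → X) : Prop :=
  ∀ (x : X) (y : Y), hY.inner (T x) y = hX.inner x (S y)

/-- Positivity in a C*-algebra, expressed as being of the form `star c * c`. -/
def IsPositiveElem {B : Type u} [NonUnitalCStarAlgebra B] (b : B) : Prop :=
  ∃ c : B, b = star c * c

/-- Positivity of a matrix over a C*-algebra. -/
def MatrixIsPositive {A : Type u} [NonUnitalCStarAlgebra A] {n : ℕ}
    (M : Matrix (Fin n) (Fin n) A) : Prop :=
  ∃ N : Matrix (Fin n) (Fin n) A, M = N.conjTranspose * N

/-- A sequential (the algebras in question are separable) approximate unit. -/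
structure IsApproxUnit {A : Type u} [NonUnitalCStarAlgebra A] (e : ℕ → A) : Prop where
  pos : ∀ n, IsPositiveElem (e n)
  norm_le_one : ∀ n, ‖e n‖ ≤ 1
  tendsto_mul_left : ∀ a : A, Tendsto (fun n => e n * a) atTop (𝓝 a)
  tendsto_mul_right : ∀ a : A, Tendsto (fun n => a * e n) atTop (𝓝 a)

/-- A completely positive map between C*-algebras: a linear map sending positive
matrices to positive matrices at every matrix level. -/
structure IsCPMap {A B : Type u} [NonUnitalCStarAlgebra A] [NonUnitalCStarAlgebra B]
    (ρ : A → B) : Prop where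
  map_add : ∀ a a', ρ (a + a') = ρ a + ρ a'
  map_smul : ∀ (c : ℂ) (a : A), ρ (c • a) = c • ρ a
  map_pos_matrix : ∀ (n : ℕ) (M : Matrix (Fin n) (Fin n) A),
    MatrixIsPositive M → MatrixIsPositive (M.map ρ)

/-- A map between C*-algebras is strict if some approximate unit of the domain is
sent to a strictly Cauchy net in the multiplier algebra of the codomain. -/
def IsStrictMap {A B : Type u} [NonUnitalCStarAlgebra A] [NonUnitalCStarAlgebra B]
    (ρ : A → B) : Prop :=
  ∃ e : ℕ → A, IsApproxUnit e ∧
    ∀ b : B, CauchySeq (fun n => ρ (e n) * b) ∧ CauchySeq (fun n => b * ρ (e n))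

/-- A completely positive map from `A` into the adjointable operators on a
right Hilbert `B`-module `X`. -/
structure IsCPAction {A B X : Type u} [NonUnitalCStarAlgebra A] [NonUnitalCStarAlgebra B]
    [NormedAddCommGroup X] [NormedSpace ℂ X] [CompleteSpace X]
    (hX : HilbertModule B X) (ρ : A → X → X) : Prop where
  map_add : ∀ a a' x, ρ (a + a') x = ρ a x + ρ a' x
  map_smul : ∀ (c : ℂ) (a : A) x, ρ (c • a) x = c • ρ a x
  add_right : ∀ a x y, ρ a (x + y) = ρ a x + ρ a y
  adjointable : ∀ a, ∃ S, HilbertModule.IsAdjointPair hX hX (ρ a) S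
  pos : ∀ (n : ℕ) (M : Matrix (Fin n) (Fin n) A), MatrixIsPositive M →
    ∀ x : Fin n → X, IsPositiveElem (∑ i, ∑ j, hX.inner (x i) (ρ (M i j) (x j)))

/-- Strictness for a completely positive map into the adjointable operators on a
Hilbert module: some approximate unit is mapped to a strictly Cauchy net. -/
def IsStrictAction {A B X : Type u} [NonUnitalCStarAlgebra A] [NonUnitalCStarAlgebra B]
    [NormedAddCommGroup X] [NormedSpace ℂ X] [CompleteSpace X]
    (hX : HilbertModule B X) (ρ : A → X → X) : Prop :=
  ∃ e : ℕ → A, IsApproxUnit e ∧ ∃ S : ℕ → X → X,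
    (∀ n, HilbertModule.IsAdjointPair hX hX (ρ (e n)) (S n)) ∧
    ∀ x, CauchySeq (fun n => ρ (e n) x) ∧ CauchySeq (fun n => S n x)

/-- A left action of `A` on a Hilbert `B`-module by adjointable operators via a
*-homomorphism, i.e. the structure of an `A`–`B`-correspondence. -/
structure IsCorrespondenceAction {A B X : Type u} [NonUnitalCStarAlgebra A]
    [NonUnitalCStarAlgebra B]
    [NormedAddCommGroup X] [NormedSpace ℂ X] [CompleteSpace X]
    (hX : HilbertModule B X) (φ : A → X → X) : Prop where
  map_add : ∀ a a' x, φ (a + a') x = φ a x + φ a' x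
  map_mul : ∀ a a' x, φ (a * a') x = φ a (φ a' x)
  map_smul : ∀ (c : ℂ) (a : A) x, φ (c • a) x = c • φ a x
  add_right : ∀ a x y, φ a (x + y) = φ a x + φ a y
  star_adjoint : ∀ a, HilbertModule.IsAdjointPair hX hX (φ a) (φ (star a))

/-- The trivial right Hilbert `B`-module structure on `B` itself. -/
def trivHM (B : Type u) [NonUnitalCStarAlgebra B] : HilbertModule B B where
  smulR b c := b * c
  inner b c := star b * c
  smulR_add := by intros; simp [mul_add]
  add_smulR := by intros; simp [add_mul]
  smulR_mul := by intros; simp [mul_assoc]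
  smulC_smulR := by intros; simp [smul_mul_assoc]
  inner_add_left := by intros; simp [star_add, add_mul]
  inner_add_right := by intros; simp [mul_add]
  inner_smulR_right := by intros; simp [mul_assoc]
  inner_smulC_right := by intros; simp [mul_smul_comm]
  star_inner := by intros; simp [star_mul, mul_assoc]
  inner_self_pos := fun b => ⟨b, rfl⟩
  norm_inner_self := by intro b; rw [CStarRing.norm_star_mul_self, pow_two]

namespace CompAux

variable {𝒜 : Type u} [NonUnitalCStarAlgebra 𝒜]

lemma isPos_zero : IsPositiveElem (0 : 𝒜) := ⟨0, by simp⟩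

lemma isPos_selfAdjoint {b : 𝒜} (hb : IsPositiveElem b) : IsSelfAdjoint b := by
  obtain ⟨c, rfl⟩ := hb; exact IsSelfAdjoint.star_mul_self c

lemma isPos_conj {y : 𝒜} (hy : IsPositiveElem y) (c : 𝒜) :
    IsPositiveElem (star c * y * c) := by
  obtain ⟨s, rfl⟩ := hy
  exact ⟨s * c, by simp [star_mul, mul_assoc]⟩

lemma isPos_smul {r : ℝ} (hr : 0 ≤ r) {b : 𝒜} (hb : IsPositiveElem b) :
    IsPositiveElem (r • b) := by
  obtain ⟨c, rfl⟩ := hb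
  refine ⟨(Real.sqrt r : ℂ) • c, ?_⟩
  rw [star_smul, smul_mul_smul_comm]
  have : (starRingEnd ℂ) (Real.sqrt r : ℂ) * (Real.sqrt r : ℂ) = ((r : ℝ) : ℂ) := by
    simp [← Complex.ofReal_mul, Real.mul_self_sqrt hr]
  rw [show (star (Real.sqrt r : ℂ)) = (starRingEnd ℂ) (Real.sqrt r : ℂ) from rfl, this]
  norm_num

section Order

variable [PartialOrder (Unitization ℂ 𝒜)] [StarOrderedRing (Unitization ℂ 𝒜)]

lemma isPos_inr {b : 𝒜} (hb : IsPositiveElem b) : 0 ≤ (b : Unitization ℂ 𝒜) := by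
  obtain ⟨c, rfl⟩ := hb
  rw [Unitization.inr_mul ℂ, Unitization.inr_star]
  exact star_mul_self_nonneg _

lemma isPos_of_inr {b : 𝒜} (hb : 0 ≤ (b : Unitization ℂ 𝒜)) : IsPositiveElem b := by
  have hsa : IsSelfAdjoint b :=
    Unitization.isSelfAdjoint_inr.mp (IsSelfAdjoint.of_nonneg hb)
  have hq : ∀ t ∈ quasispectrum ℝ b, (0:ℝ) ≤ t := by
    intro t ht
    rw [Unitization.quasispectrum_eq_spectrum_inr' ℝ ℂ b] at ht
    exact spectrum_nonneg_of_nonneg hb ht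
  refine ⟨cfcₙ (fun t : ℝ => Real.sqrt t) b, ?_⟩
  have hd : IsSelfAdjoint (cfcₙ (fun t : ℝ => Real.sqrt t) b) := cfcₙ_predicate _ b
  have h1 : cfcₙ (fun t : ℝ => Real.sqrt t * Real.sqrt t) b = cfcₙ (id : ℝ → ℝ) b :=
    cfcₙ_congr fun t ht => Real.mul_self_sqrt (hq t ht)
  rw [hd.star_eq, ← cfcₙ_mul _ _ b, h1, cfcₙ_id ℝ b hsa]

lemma isPos_add {x y : 𝒜} (hx : IsPositiveElem x) (hy : IsPositiveElem y) :
    IsPositiveElem (x + y) := by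
  refine isPos_of_inr ?_
  rw [Unitization.inr_add ℂ]
  exact add_nonneg (isPos_inr hx) (isPos_inr hy)

lemma isPos_norm_mono {a b : 𝒜} (ha : IsPositiveElem a) (hab : IsPositiveElem (b - a)) :
    ‖a‖ ≤ ‖b‖ := by
  rw [← Unitization.norm_inr (𝕜 := ℂ) a, ← Unitization.norm_inr (𝕜 := ℂ) b]
  refine CStarAlgebra.norm_le_norm_of_nonneg_of_le (isPos_inr ha) ?_
  have := isPos_inr hab
  rw [Unitization.inr_sub ℂ] at this
  exact sub_nonneg.mp this

end Order

end CompAux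
namespace CompAux

variable {𝒜 : Type u} [NonUnitalCStarAlgebra 𝒜]

lemma real_smul_eq (r : ℝ) (b : 𝒜) : ((r : ℂ)) • b = r • b := by norm_num

section Order2

variable [PartialOrder (Unitization ℂ 𝒜)] [StarOrderedRing (Unitization ℂ 𝒜)]

lemma isPos_limit {g : ℕ → 𝒜} {x : 𝒜} (hg : ∀ n, IsPositiveElem (g n))
    (hx : Tendsto g atTop (𝓝 x)) : IsPositiveElem x := by
  refine isPos_of_inr ?_
  have hcont : Tendsto (fun n => ((g n : Unitization ℂ 𝒜))) atTop (𝓝 (x : Unitization ℂ 𝒜)) :=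
    ((Unitization.isometry_inr (𝕜 := ℂ) (A := 𝒜)).continuous.tendsto x).comp hx
  exact (CStarAlgebra.isClosed_nonneg (A := Unitization ℂ 𝒜)).mem_of_tendsto hcont
    (Filter.Eventually.of_forall fun n => isPos_inr (hg n))

end Order2

lemma isPos_sum {s : Finset ℕ} {g : ℕ → 𝒜} (hg : ∀ n, IsPositiveElem (g n)) :
    IsPositiveElem (∑ n ∈ s, g n) := by
  letI := CStarAlgebra.spectralOrder (Unitization ℂ 𝒜)
  letI := CStarAlgebra.spectralOrderedRing (Unitization ℂ 𝒜)
  classical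
  induction s using Finset.induction with
  | empty => simpa using isPos_zero
  | insert _ _ hns ih => rw [Finset.sum_insert hns]; exact isPos_add (hg _) ih

lemma quasispectrum_subset {b : 𝒜} (hb : IsPositiveElem b) (t : ℝ)
    (ht : t ∈ quasispectrum ℝ b) : 0 ≤ t ∧ t ≤ ‖b‖ := by
  rw [Unitization.quasispectrum_eq_spectrum_inr' ℝ ℂ b] at ht
  constructor
  · letI := CStarAlgebra.spectralOrder (Unitization ℂ 𝒜)
    letI := CStarAlgebra.spectralOrderedRing (Unitization ℂ 𝒜)
    exact spectrum_nonneg_of_nonneg (isPos_inr hb) ht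
  · calc t ≤ |t| := le_abs_self t
      _ ≤ ‖(b : Unitization ℂ 𝒜)‖ := spectrum.norm_le_norm_of_mem ht
      _ = ‖b‖ := Unitization.norm_inr b

/-- quasispectrum norm bound for selfadjoint elements -/
lemma quasispectrum_abs_le {b : 𝒜} (t : ℝ) (ht : t ∈ quasispectrum ℝ b) : |t| ≤ ‖b‖ := by
  rw [Unitization.quasispectrum_eq_spectrum_inr' ℝ ℂ b] at ht
  calc |t| ≤ ‖(b : Unitization ℂ 𝒜)‖ := spectrum.norm_le_norm_of_mem ht
    _ = ‖b‖ := Unitization.norm_inr b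

lemma isPos_sq_sub {b : 𝒜} (hb : IsPositiveElem b) (h1 : ‖b‖ ≤ 1) :
    IsPositiveElem (b - b * b) := by
  have hsa : IsSelfAdjoint b := isPos_selfAdjoint hb
  have hq : ∀ t ∈ quasispectrum ℝ b, 0 ≤ t - t * t := by
    intro t ht
    obtain ⟨h0, h1'⟩ := quasispectrum_subset hb t ht
    nlinarith
  refine ⟨cfcₙ (fun t : ℝ => Real.sqrt (t - t * t)) b, ?_⟩
  have hd : IsSelfAdjoint (cfcₙ (fun t : ℝ => Real.sqrt (t - t * t)) b) := cfcₙ_predicate _ b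
  have h2 : cfcₙ (fun t : ℝ => Real.sqrt (t - t * t) * Real.sqrt (t - t * t)) b
      = cfcₙ (fun t : ℝ => t - t * t) b :=
    cfcₙ_congr fun t ht => Real.mul_self_sqrt (hq t ht)
  have h3 : cfcₙ (fun t : ℝ => t - t * t) b = cfcₙ (id : ℝ → ℝ) b - cfcₙ (fun t : ℝ => t * t) b :=
    cfcₙ_sub _ _ b
  have h4 : cfcₙ (fun t : ℝ => t * t) b = cfcₙ (id : ℝ → ℝ) b * cfcₙ (id : ℝ → ℝ) b :=
    cfcₙ_mul _ _ b
  rw [hd.star_eq, ← cfcₙ_mul _ _ b, h2, h3, h4, cfcₙ_id ℝ b hsa]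

end CompAux
namespace CompAux

variable {A' B' : Type u} [NonUnitalCStarAlgebra A'] [NonUnitalCStarAlgebra B'] {σ : A' → B'}

lemma cp_map_zero (hσ : IsCPMap σ) : σ 0 = 0 := by
  have h : σ 0 + 0 = σ 0 + σ 0 := by
    rw [add_zero]; simpa using (hσ.map_add 0 0)
  exact (add_left_cancel h).symm

lemma cp_map_sub (hσ : IsCPMap σ) (a b : A') : σ (a - b) = σ a - σ b := by
  have h : σ (a - b) + σ b = σ a := by
    rw [← hσ.map_add, sub_add_cancel]
  exact eq_sub_of_add_eq h

lemma cp_real_smul (hσ : IsCPMap σ) (r : ℝ) (a : A') : σ (r • a) = r • σ a := by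
  rw [← real_smul_eq, hσ.map_smul, real_smul_eq]

lemma cp_map_pos (hσ : IsCPMap σ) {b : A'} (hb : IsPositiveElem b) :
    IsPositiveElem (σ b) := by
  obtain ⟨c, rfl⟩ := hb
  have hM : MatrixIsPositive (Matrix.of fun (_ _ : Fin 1) => star c * c) := by
    refine ⟨Matrix.of fun _ _ => c, ?_⟩
    ext i j
    simp [Matrix.mul_apply, Matrix.conjTranspose_apply]
  obtain ⟨N, hN⟩ := hσ.map_pos_matrix 1 _ hM
  refine ⟨N 0 0, ?_⟩
  have h00 : ((Matrix.of fun (_ _ : Fin 1) => star c * c).map σ) 0 0 = (N.conjTranspose * N) 0 0 := by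
    rw [hN]
  simpa [Matrix.mul_apply, Matrix.conjTranspose_apply, Matrix.map_apply] using h00

lemma cp_exists_bound (hσ : IsCPMap σ) : ∃ M : ℝ, 0 < M ∧ ∀ a, ‖σ a‖ ≤ M * ‖a‖ := by
  classical
  letI := CStarAlgebra.spectralOrder (Unitization ℂ A')
  letI := CStarAlgebra.spectralOrderedRing (Unitization ℂ A')
  have step1 : ∃ M : ℝ, 0 < M ∧ ∀ a, IsPositiveElem a → ‖a‖ ≤ 1 → ‖σ a‖ ≤ M := by
    by_contra hcon
    push_neg at hcon
    have hsel : ∀ n : ℕ, ∃ a, IsPositiveElem a ∧ ‖a‖ ≤ 1 ∧ (4 : ℝ) ^ n < ‖σ a‖ :=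
      fun n => hcon _ (by positivity)
    choose a ha h1 h4 using hsel
    set u : ℕ → A' := fun n => (2⁻¹ : ℝ) ^ n • a n with hu
    have hunorm : ∀ n, ‖u n‖ ≤ (2⁻¹ : ℝ) ^ n := by
      intro n
      calc ‖u n‖ = |(2⁻¹:ℝ)^n| * ‖a n‖ := norm_smul _ _
        _ ≤ (2⁻¹:ℝ)^n * 1 := by
            rw [abs_of_nonneg (by positivity)]
            exact mul_le_mul_of_nonneg_left (h1 n) (by positivity)
        _ = _ := mul_one _
    have hsummable : Summable u :=
      Summable.of_norm_bounded (summable_geometric_of_lt_one (by norm_num) (by norm_num)) hunorm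
    set s := ∑' n, u n with hs
    have hupos : ∀ n, IsPositiveElem (u n) := fun n => isPos_smul (by positivity) (ha n)
    have hposdiff : ∀ k, IsPositiveElem (s - u k) := by
      intro k
      have htail : Summable (fun n => if n = k then 0 else u n) := by
        refine hsummable.summable_of_eq_zero_or_self (fun n => ?_)
        split_ifs <;> simp
      have hts : s = u k + ∑' n, if n = k then 0 else u n := Summable.tsum_eq_add_tsum_ite hsummable k
      have heq : s - u k = ∑' n, if n = k then 0 else u n := by rw [hts]; abel
      rw [heq]
      refine isPos_limit (g := fun J => ∑ n ∈ Finset.range J, if n = k then 0 else u n) ?_ ?_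
      · intro J
        exact isPos_sum (fun n => by split_ifs; exacts [isPos_zero, hupos n])
      · exact htail.hasSum.tendsto_sum_nat
    have hk : ∀ k, (2:ℝ) ^ k < ‖σ s‖ := by
      intro k
      have h1' : ‖σ (u k)‖ ≤ ‖σ s‖ := by
        refine isPos_norm_mono (cp_map_pos hσ (hupos k)) ?_
        rw [← cp_map_sub hσ]
        exact cp_map_pos hσ (hposdiff k)
      have h2' : ‖σ (u k)‖ = (2⁻¹:ℝ)^k * ‖σ (a k)‖ := by
        rw [hu]
        simp only [cp_real_smul hσ]
        rw [norm_smul, Real.norm_eq_abs, abs_of_nonneg (by positivity : (0:ℝ) ≤ (2⁻¹:ℝ)^k)]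
      have h3' : (4:ℝ)^k < ‖σ (a k)‖ := h4 k
      have hpow : (0:ℝ) < (2⁻¹:ℝ)^k := by positivity
      have hA : (2:ℝ)^k = (4:ℝ)^k * 2⁻¹^k := by
        rw [← mul_pow]; norm_num
      calc (2:ℝ)^k = 4^k * 2⁻¹^k := hA
        _ < ‖σ (a k)‖ * 2⁻¹^k := mul_lt_mul_of_pos_right h3' hpow
        _ = ‖σ (u k)‖ := by rw [h2']; ring
        _ ≤ ‖σ s‖ := h1'
    obtain ⟨k, hk2⟩ := pow_unbounded_of_one_lt ‖σ s‖ (by norm_num : (1:ℝ) < 2)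
    exact absurd (hk k) (not_lt.mpr (le_of_lt hk2))
  obtain ⟨M, hM, hMb⟩ := step1
  have step1' : ∀ a, IsPositiveElem a → ‖σ a‖ ≤ M * ‖a‖ := by
    intro a hpa
    rcases eq_or_ne a 0 with rfl | hne
    · simp [cp_map_zero hσ]
    · have hna : (0:ℝ) < ‖a‖ := norm_pos_iff.mpr hne
      set a' := ‖a‖⁻¹ • a with ha'
      have hpa' : IsPositiveElem a' := isPos_smul (by positivity) hpa
      have hna' : ‖a'‖ ≤ 1 := by
        rw [ha', norm_smul, Real.norm_eq_abs, abs_of_nonneg (by positivity)]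
        rw [inv_mul_cancel₀ (ne_of_gt hna)]
      have key : σ a = ‖a‖ • σ a' := by
        rw [← cp_real_smul hσ, ha', smul_inv_smul₀ (ne_of_gt hna)]
      rw [key, norm_smul, Real.norm_eq_abs, abs_of_nonneg (le_of_lt hna), mul_comm]
      exact mul_le_mul_of_nonneg_right (hMb a' hpa' hna') (le_of_lt hna)
  have step2 : ∀ h : A', IsSelfAdjoint h → ‖σ h‖ ≤ 2 * M * ‖h‖ := by
    intro h hsa
    set p := cfcₙ (fun t : ℝ => Real.sqrt (max t 0)) h with hp
    set q := cfcₙ (fun t : ℝ => Real.sqrt (max (-t) 0)) h with hqdef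
    have hpsa : IsSelfAdjoint p := cfcₙ_predicate _ h
    have hqsa : IsSelfAdjoint q := cfcₙ_predicate _ h
    have hpp : p * p = cfcₙ (fun t : ℝ => max t 0) h := by
      rw [hp, ← cfcₙ_mul _ _ h]
      exact cfcₙ_congr fun t _ => Real.mul_self_sqrt (le_max_right _ _)
    have hqq : q * q = cfcₙ (fun t : ℝ => max (-t) 0) h := by
      rw [hqdef, ← cfcₙ_mul _ _ h]
      exact cfcₙ_congr fun t _ => Real.mul_self_sqrt (le_max_right _ _)
    have hdecomp : p * p - q * q = h := by
      rw [hpp, hqq, ← cfcₙ_sub _ _ h]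
      have hfun : (fun t : ℝ => max t 0 - max (-t) 0) = (id : ℝ → ℝ) := by
        funext t
        rcases le_total t 0 with h' | h'
        · rw [max_eq_right h', max_eq_left (neg_nonneg.mpr h')]; simp
        · rw [max_eq_left h', max_eq_right (neg_nonpos.mpr h')]; simp
      rw [hfun, cfcₙ_id ℝ h hsa]
    have hppos : IsPositiveElem (p * p) := ⟨p, by rw [hpsa.star_eq]⟩
    have hqpos : IsPositiveElem (q * q) := ⟨q, by rw [hqsa.star_eq]⟩
    have hppn : ‖p * p‖ ≤ ‖h‖ := by
      rw [hpp]
      refine norm_cfcₙ_le fun t ht => ?_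
      calc ‖max t 0‖ = |max t 0| := rfl
        _ ≤ |t| := by rcases le_total t 0 with h' | h' <;>
            simp [max_eq_right, max_eq_left, h', abs_nonneg]
        _ ≤ ‖h‖ := quasispectrum_abs_le t ht
    have hqqn : ‖q * q‖ ≤ ‖h‖ := by
      rw [hqq]
      refine norm_cfcₙ_le fun t ht => ?_
      calc ‖max (-t) 0‖ = |max (-t) 0| := rfl
        _ ≤ |t| := by rcases le_total t 0 with h' | h' <;>
            simp [max_eq_right, max_eq_left, neg_nonneg.mpr, neg_nonpos.mpr, h', abs_nonneg,
              abs_le, le_abs_self, neg_abs_le]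
        _ ≤ ‖h‖ := quasispectrum_abs_le t ht
    calc ‖σ h‖ = ‖σ (p * p) - σ (q * q)‖ := by rw [← cp_map_sub hσ, hdecomp]
      _ ≤ ‖σ (p * p)‖ + ‖σ (q * q)‖ := norm_sub_le _ _
      _ ≤ M * ‖p * p‖ + M * ‖q * q‖ := add_le_add (step1' _ hppos) (step1' _ hqpos)
      _ ≤ M * ‖h‖ + M * ‖h‖ := add_le_add
          (mul_le_mul_of_nonneg_left hppn (le_of_lt hM))
          (mul_le_mul_of_nonneg_left hqqn (le_of_lt hM))
      _ = 2 * M * ‖h‖ := by ring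
  refine ⟨4 * M + 1, by positivity, fun b => ?_⟩
  set h := ((2:ℂ))⁻¹ • (b + star b) with hh
  set g := (-(Complex.I) / 2) • (b - star b) with hg
  have hhsa : IsSelfAdjoint h := by
    rw [hh, IsSelfAdjoint, star_smul, star_add, star_star]
    rw [show star ((2:ℂ))⁻¹ = ((2:ℂ))⁻¹ by simp]
    rw [add_comm]
  have hgsa : IsSelfAdjoint g := by
    rw [hg, IsSelfAdjoint, star_smul, star_sub, star_star]
    rw [show star (-(Complex.I) / 2) = Complex.I / 2 by simp [star_div₀, neg_div]]
    have : (Complex.I / 2) • (star b - b) = (-(Complex.I) / 2) • (b - star b) := by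
      rw [← neg_sub b (star b), smul_neg, ← neg_smul, neg_div]
    rw [this]
  have hrecomp : h + Complex.I • g = b := by
    rw [hh, hg, smul_smul]
    have hsc : Complex.I * (-(Complex.I) / 2) = ((2:ℂ))⁻¹ := by
      rw [mul_div_assoc', mul_neg, Complex.I_mul_I, neg_neg]
      norm_num
    rw [hsc, ← smul_add]
    have : b + star b + (b - star b) = (2:ℂ) • b := by
      rw [two_smul]; abel
    rw [this, smul_smul]
    norm_num
  have hbn : ‖σ b‖ ≤ ‖σ h‖ + ‖σ g‖ := by
    calc ‖σ b‖ = ‖σ h + Complex.I • σ g‖ := by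
          rw [← hσ.map_smul, ← hσ.map_add, hrecomp]
      _ ≤ ‖σ h‖ + ‖Complex.I • σ g‖ := norm_add_le _ _
      _ = ‖σ h‖ + ‖σ g‖ := by rw [norm_smul, Complex.norm_I, one_mul]
  have hhn : ‖h‖ ≤ ‖b‖ := by
    rw [hh]
    calc ‖((2:ℂ))⁻¹ • (b + star b)‖ = ‖((2:ℂ))⁻¹‖ * ‖b + star b‖ := norm_smul _ _
      _ ≤ (2⁻¹ : ℝ) * (‖b‖ + ‖star b‖) := by
          refine mul_le_mul (by norm_num) (norm_add_le _ _) (norm_nonneg _) (by norm_num)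
      _ = ‖b‖ := by rw [norm_star]; ring
  have hgn : ‖g‖ ≤ ‖b‖ := by
    rw [hg]
    calc ‖(-(Complex.I) / 2) • (b - star b)‖ = ‖(-(Complex.I) / 2)‖ * ‖b - star b‖ := norm_smul _ _
      _ ≤ (2⁻¹ : ℝ) * (‖b‖ + ‖star b‖) := by
          refine mul_le_mul ?_ (norm_sub_le _ _) (norm_nonneg _) (by norm_num)
          rw [norm_div, norm_neg, Complex.norm_I]
          norm_num
      _ = ‖b‖ := by rw [norm_star]; ring
  calc ‖σ b‖ ≤ ‖σ h‖ + ‖σ g‖ := hbn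
    _ ≤ 2 * M * ‖h‖ + 2 * M * ‖g‖ := add_le_add (step2 h hhsa) (step2 g hgsa)
    _ ≤ 2 * M * ‖b‖ + 2 * M * ‖b‖ := add_le_add
        (mul_le_mul_of_nonneg_left hhn (by positivity))
        (mul_le_mul_of_nonneg_left hgn (by positivity))
    _ = 4 * M * ‖b‖ := by ring
    _ ≤ (4 * M + 1) * ‖b‖ := by nlinarith [norm_nonneg b]

end CompAux
namespace CompAux

variable {𝒞 : Type u} [NonUnitalCStarAlgebra 𝒞]

lemma schwarz_matrix (M : Matrix (Fin 2) (Fin 2) 𝒞) (hM : MatrixIsPositive M) (c : 𝒞) :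
    ‖M 0 1 * c‖ ^ 2 ≤ ‖M 0 0‖ * ‖star c * M 1 1 * c‖ := by
  obtain ⟨W, hW⟩ := hM
  have hent : ∀ i j, M i j = star (W 0 i) * W 0 j + star (W 1 i) * W 1 j := by
    intro i j
    rw [hW]
    simp [Matrix.mul_apply, Matrix.conjTranspose_apply, Fin.sum_univ_two]
  have hM10 : M 1 0 = star (M 0 1) := by
    rw [hent 1 0, hent 0 1]
    simp only [star_add, star_mul, star_star]
  have hM00sa : IsSelfAdjoint (M 0 0) := by
    rw [IsSelfAdjoint, hent 0 0]
    simp only [star_add, star_mul, star_star]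
  set D := Unitization ℂ 𝒞 with hD
  letI : PartialOrder D := CStarAlgebra.spectralOrder D
  letI : StarOrderedRing D := CStarAlgebra.spectralOrderedRing D
  set p : D := (M 0 0 : D) with hpdef
  set q : D := (M 1 1 : D) with hqdef
  set x : D := (M 0 1 : D) with hxdef
  set c' : D := (c : D) with hc'def
  set z : D := x * c' with hzdef
  set S : D := star z * z with hSdef
  set Q : D := star c' * q * c' with hQdef
  have hpsa : IsSelfAdjoint p := Unitization.isSelfAdjoint_inr.mpr hM00sa
  -- quadratic form positivity
  have key : ∀ v1 v2 : D,
      0 ≤ star v1 * p * v1 + star v1 * x * v2 + star v2 * star x * v1 + star v2 * q * v2 := by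
    intro v1 v2
    have hω : ∀ k : Fin 2,
        (0:D) ≤ star ((W k 0 : D) * v1 + (W k 1 : D) * v2) * ((W k 0 : D) * v1 + (W k 1 : D) * v2) :=
      fun k => star_mul_self_nonneg _
    have hsum := add_nonneg (hω 0) (hω 1)
    have hexp : star ((W 0 0 : D) * v1 + (W 0 1 : D) * v2) * ((W 0 0 : D) * v1 + (W 0 1 : D) * v2)
        + star ((W 1 0 : D) * v1 + (W 1 1 : D) * v2) * ((W 1 0 : D) * v1 + (W 1 1 : D) * v2)
        = star v1 * p * v1 + star v1 * x * v2 + star v2 * star x * v1 + star v2 * q * v2 := by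
      rw [hpdef, hqdef, hxdef, hent 0 0, hent 1 1, hent 0 1]
      simp only [Unitization.inr_add, Unitization.inr_mul, star_add, star_mul, star_star,
        Unitization.inr_star]
      erw [star_add, star_mul, star_mul, star_star, star_star]
      noncomm_ring
    rw [← hexp]
    exact hsum
  -- main quadratic estimate
  have hq : ∀ t : ℝ, (2 * t - ‖p‖ * t * t) • S ≤ Q := by
    intro t
    have h1 := key (-(t • z)) c'
    have hzx : star z * x * c' = S := by rw [hSdef, hzdef, mul_assoc]
    have hsx : star c' * star x = star z := by rw [hzdef, star_mul]
    have e1 : star (-(t • z)) * p * (-(t • z)) = star (t • z) * p * (t • z) := by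
      rw [star_neg, neg_mul, mul_neg, neg_mul, neg_neg]
    have e2 : star (-(t • z)) * x * c' = -(t • S) := by
      rw [star_neg, star_smul, star_trivial, neg_mul, smul_mul_assoc, neg_mul, smul_mul_assoc, neg_inj]
      rw [hzx]
    have e3 : star c' * star x * (-(t • z)) = -(t • S) := by
      rw [hsx, mul_neg, mul_smul_comm, hSdef]
    rw [e1, e2, e3] at h1
    have h2 : star (t • z) * p * (t • z) ≤ ‖p‖ • (star (t • z) * (t • z)) :=
      CStarAlgebra.star_left_conjugate_le_norm_smul hpsa
    have e4 : star (t • z) * (t • z) = (t * t) • S := by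
      rw [star_smul, star_trivial, smul_mul_assoc, mul_smul_comm, smul_smul, hSdef]
    rw [e4, smul_smul] at h2
    have h3 : (0:D) ≤ (‖p‖ * (t * t)) • S - t • S - t • S + Q := by
      calc (0:D) ≤ star (t • z) * p * (t • z) + -(t • S) + -(t • S) + Q := h1
        _ = star (t • z) * p * (t • z) - t • S - t • S + Q := by abel
        _ ≤ (‖p‖ * (t * t)) • S - t • S - t • S + Q := by
            have := add_le_add_left (add_le_add_left (add_le_add_left h2 (-(t • S))) (-(t • S))) Q
            calc star (t • z) * p * (t • z) - t • S - t • S + Q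
                = star (t • z) * p * (t • z) + -(t • S) + -(t • S) + Q := by abel
              _ ≤ (‖p‖ * (t * t)) • S + -(t • S) + -(t • S) + Q := this
              _ = (‖p‖ * (t * t)) • S - t • S - t • S + Q := by abel
    have h4 : (2 * t - ‖p‖ * t * t) • S = t • S + t • S - (‖p‖ * (t * t)) • S := by
      rw [← add_smul, ← sub_smul]
      congr 1
      ring
    rw [h4]
    have := sub_nonneg.mp (by
      calc (0:D) ≤ (‖p‖ * (t * t)) • S - t • S - t • S + Q := h3
        _ = Q - (t • S + t • S - (‖p‖ * (t * t)) • S) := by abel)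
    exact this
  -- norm transfer helpers
  have hSnonneg_smul : ∀ r : ℝ, 0 ≤ r → (0:D) ≤ r • S := by
    intro r hr
    have : r • S = star ((Real.sqrt r : ℝ) • z) * ((Real.sqrt r : ℝ) • z) := by
      rw [star_smul, star_trivial, smul_mul_assoc, mul_smul_comm, smul_smul,
        Real.mul_self_sqrt hr, hSdef]
    rw [this]
    exact star_mul_self_nonneg _
  have hnormS : ‖S‖ = ‖M 0 1 * c‖ ^ 2 := by
    rw [hSdef, CStarRing.norm_star_mul_self, hzdef, hxdef, hc'def, ← Unitization.inr_mul,
      Unitization.norm_inr, pow_two]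
  have hnormQ : ‖Q‖ = ‖star c * M 1 1 * c‖ := by
    rw [hQdef, hqdef, hc'def, ← Unitization.inr_star, ← Unitization.inr_mul, ← Unitization.inr_mul,
      Unitization.norm_inr]
  have hnormp : ‖p‖ = ‖M 0 0‖ := Unitization.norm_inr _
  have core : ∀ t : ℝ, 0 ≤ 2 * t - ‖p‖ * t * t → (2 * t - ‖p‖ * t * t) * ‖S‖ ≤ ‖Q‖ := by
    intro t ht
    have h5 : ‖(2 * t - ‖p‖ * t * t) • S‖ ≤ ‖Q‖ :=
      CStarAlgebra.norm_le_norm_of_nonneg_of_le (hSnonneg_smul _ ht) (hq t)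
    rwa [norm_smul, Real.norm_eq_abs, abs_of_nonneg ht] at h5
  rcases (norm_nonneg p).eq_or_lt' with hp0 | hppos
  · -- ‖p‖ = 0
    have hS0 : ‖S‖ = 0 := by
      by_contra hS
      have hSpos : 0 < ‖S‖ := lt_of_le_of_ne (norm_nonneg S) (Ne.symm hS)
      set t := (‖Q‖ + 1) / (2 * ‖S‖) with htdef
      have htpos : 0 ≤ t := by positivity
      have hcoef : 2 * t - ‖p‖ * t * t = 2 * t := by rw [hp0]; ring
      have := core t (by rw [hcoef]; positivity)
      rw [hcoef, htdef] at this
      have heq : 2 * ((‖Q‖ + 1) / (2 * ‖S‖)) * ‖S‖ = ‖Q‖ + 1 := by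
        field_simp
      rw [heq] at this
      linarith
    calc ‖M 0 1 * c‖ ^ 2 = ‖S‖ := hnormS.symm
      _ = 0 := hS0
      _ ≤ ‖M 0 0‖ * ‖star c * M 1 1 * c‖ := by
          positivity
  · -- ‖p‖ > 0
    have hcoef : 2 * ‖p‖⁻¹ - ‖p‖ * ‖p‖⁻¹ * ‖p‖⁻¹ = ‖p‖⁻¹ := by
      field_simp
      ring
    have h6 := core ‖p‖⁻¹ (by rw [hcoef]; positivity)
    rw [hcoef] at h6
    have h7 : ‖S‖ ≤ ‖p‖ * ‖Q‖ := by
      have := mul_le_mul_of_nonneg_left h6 (le_of_lt hppos)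
      rwa [← mul_assoc, mul_inv_cancel₀ (ne_of_gt hppos), one_mul] at this
    calc ‖M 0 1 * c‖ ^ 2 = ‖S‖ := hnormS.symm
      _ ≤ ‖p‖ * ‖Q‖ := h7
      _ = ‖M 0 0‖ * ‖star c * M 1 1 * c‖ := by rw [hnormp, hnormQ]

end CompAux
namespace CompAux

variable {A' B' : Type u} [NonUnitalCStarAlgebra A'] [NonUnitalCStarAlgebra B'] {σ : A' → B'}

lemma cp_schwarz (hσ : IsCPMap σ) (u v : A') (c : B') :
    ‖σ (u * v) * c‖ ^ 2 ≤ ‖σ (u * star u)‖ * ‖star c * σ (star v * v) * c‖ := by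
  classical
  set N : Matrix (Fin 2) (Fin 2) A' :=
    Matrix.of fun k j => if k = 0 then (if j = 0 then star u else v) else 0 with hNdef
  set M : Matrix (Fin 2) (Fin 2) A' := N.conjTranspose * N with hMdef
  have hMpos : MatrixIsPositive M := ⟨N, rfl⟩
  have h00 : M 0 0 = u * star u := by
    simp [hMdef, hNdef, Matrix.mul_apply, Matrix.conjTranspose_apply, Fin.sum_univ_two]
  have h01 : M 0 1 = u * v := by
    simp [hMdef, hNdef, Matrix.mul_apply, Matrix.conjTranspose_apply, Fin.sum_univ_two]
  have h11 : M 1 1 = star v * v := by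
    simp [hMdef, hNdef, Matrix.mul_apply, Matrix.conjTranspose_apply, Fin.sum_univ_two]
  have := schwarz_matrix (M.map σ) (hσ.map_pos_matrix 2 M hMpos) c
  simpa [Matrix.map_apply, h00, h01, h11] using this

/-- Lipschitz continuity transfer for a bounded linear-ish map. -/
lemma cp_tendsto (hσ : IsCPMap σ) {Mb : ℝ} (hb : ∀ a, ‖σ a‖ ≤ Mb * ‖a‖)
    {g : ℕ → A'} {a : A'} (hg : Tendsto g atTop (𝓝 a)) :
    Tendsto (fun n => σ (g n)) atTop (𝓝 (σ a)) := by
  rw [tendsto_iff_norm_sub_tendsto_zero] at hg ⊢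
  have hbound : ∀ n, ‖σ (g n) - σ a‖ ≤ Mb * ‖g n - a‖ := by
    intro n
    rw [← cp_map_sub hσ]
    exact hb _
  have h0 : Tendsto (fun n => Mb * ‖g n - a‖) atTop (𝓝 0) := by
    simpa using hg.const_mul Mb
  exact squeeze_zero (fun n => norm_nonneg _) hbound h0

end CompAux
open CompAux in
/-- If `ρ : A → B` and `σ : B → C` are strict completely positive
maps between C*-algebras, then `σ ∘ ρ : A → C` is a strict completely positive map. -/
theorem comp_strict_cp {A B C : Type u}
    [NonUnitalCStarAlgebra A] [NonUnitalCStarAlgebra B] [NonUnitalCStarAlgebra C]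
    (ρ : A → B) (σ : B → C)
    (hρcp : IsCPMap ρ) (hρstrict : _root_.IsStrictMap ρ)
    (hσcp : IsCPMap σ) (hσstrict : _root_.IsStrictMap σ) :
    IsCPMap (σ ∘ ρ) ∧ _root_.IsStrictMap (σ ∘ ρ) := by
  classical
  letI := CStarAlgebra.spectralOrder (Unitization ℂ C)
  letI := CStarAlgebra.spectralOrderedRing (Unitization ℂ C)
  have hcp : IsCPMap (σ ∘ ρ) := by
    refine ⟨fun a a' => ?_, fun z a => ?_, fun n M hM => ?_⟩
    · simp only [Function.comp_apply, hρcp.map_add, hσcp.map_add]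
    · simp only [Function.comp_apply, hρcp.map_smul, hσcp.map_smul]
    · have hmm : M.map (σ ∘ ρ) = (M.map ρ).map σ := by
        ext i j; simp [Matrix.map_apply]
      rw [hmm]
      exact hσcp.map_pos_matrix n _ (hρcp.map_pos_matrix n M hM)
  refine ⟨hcp, ?_⟩
  obtain ⟨e, he, hecau⟩ := hρstrict
  obtain ⟨f, hf, hfcau⟩ := hσstrict
  obtain ⟨Mρ, hMρpos, hMρ⟩ := cp_exists_bound hρcp
  obtain ⟨Mσ, hMσpos, hMσ⟩ := cp_exists_bound hσcp
  set x : ℕ → B := fun n => ρ (e n) with hx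
  have hxpos : ∀ n, IsPositiveElem (x n) := fun n => cp_map_pos hρcp (he.pos n)
  have hxbd : ∀ n, ‖x n‖ ≤ Mρ := by
    intro n
    calc ‖x n‖ ≤ Mρ * ‖e n‖ := hMρ _
      _ ≤ Mρ * 1 := mul_le_mul_of_nonneg_left (he.norm_le_one n) (le_of_lt hMρpos)
      _ = Mρ := mul_one _
  have hfsa : ∀ k, IsSelfAdjoint (f k) := fun k => isPos_selfAdjoint (hf.pos k)
  -- main claim
  have main : ∀ c : C, CauchySeq fun n => σ (x n) * c := by
    intro c
    obtain ⟨Lc, hLc⟩ := cauchySeq_tendsto_of_complete (hfcau c).1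
    -- the `w` family (approximations to (1-f k) f l (1-f k))
    set w : ℕ → ℕ → B := fun k l =>
      f l - f l * f k - f k * f l + f k * (f l * f k) with hw
    set D : ℕ → C := fun k =>
      star c * Lc - star c * σ (f k) * c - star c * σ (f k) * c
        + star c * σ (f k * f k) * c with hD
    -- (A) convergence to D k
    have hconvD : ∀ k, Tendsto (fun l => star c * σ (w k l) * c) atTop (𝓝 (D k)) := by
      intro k
      have hsplit : ∀ l, star c * σ (w k l) * c =
          star c * σ (f l) * c - star c * σ (f l * f k) * c - star c * σ (f k * f l) * c
            + star c * σ (f k * (f l * f k)) * c := by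
        intro l
        rw [hw]
        simp only [cp_map_sub hσcp, hσcp.map_add, mul_sub, sub_mul, mul_add, add_mul]
      simp only [hsplit]
      have h1 : Tendsto (fun l => star c * σ (f l) * c) atTop (𝓝 (star c * Lc)) := by
        have : ∀ l, star c * σ (f l) * c = star c * (σ (f l) * c) := fun l => mul_assoc _ _ _
        simp only [this]
        exact (hLc.const_mul (star c))
      have h2 : Tendsto (fun l => star c * σ (f l * f k) * c) atTop
          (𝓝 (star c * σ (f k) * c)) := by
        have := cp_tendsto hσcp hMσ (hf.tendsto_mul_left (f k))
        exact ((this.const_mul (star c)).mul_const c)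
      have h3 : Tendsto (fun l => star c * σ (f k * f l) * c) atTop
          (𝓝 (star c * σ (f k) * c)) := by
        have := cp_tendsto hσcp hMσ (hf.tendsto_mul_right (f k))
        exact ((this.const_mul (star c)).mul_const c)
      have h4 : Tendsto (fun l => star c * σ (f k * (f l * f k)) * c) atTop
          (𝓝 (star c * σ (f k * f k) * c)) := by
        have hmul : Tendsto (fun l => f k * (f l * f k)) atTop (𝓝 (f k * f k)) := by
          have := (hf.tendsto_mul_left (f k)).const_mul (f k)
          simpa using this
        have := cp_tendsto hσcp hMσ hmul
        exact ((this.const_mul (star c)).mul_const c)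
      rw [hD]
      exact ((h1.sub h2).sub h3).add h4
    -- (B) positivity of w and D
    have hwpos : ∀ k l, IsPositiveElem (w k l) := by
      intro k l
      obtain ⟨b, hb⟩ := hf.pos l
      refine ⟨b - b * f k, ?_⟩
      have hfk : star (f k) = f k := (hfsa k).star_eq
      have e_rhs : star (b - b * f k) * (b - b * f k) =
          (star b * b) - (star b * b) * f k - f k * (star b * b)
            + f k * ((star b * b) * f k) := by
        simp only [star_sub, star_mul, hfk]
        noncomm_ring
      rw [hw]
      simp only []
      rw [e_rhs, ← hb]
    have hDpos : ∀ k, IsPositiveElem (D k) := by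
      intro k
      refine isPos_limit (g := fun l => star c * σ (w k l) * c) ?_ (hconvD k)
      intro l
      exact isPos_conj (cp_map_pos hσcp (hwpos k l)) c
    -- (C) D k ≤ E k and norm bound
    have hDnorm : ∀ k, ‖D k‖ ≤ ‖c‖ * ‖Lc - σ (f k) * c‖ := by
      intro k
      have hEk : star c * Lc - star c * σ (f k) * c - D k
          = star c * σ (f k - f k * f k) * c := by
        rw [hD, cp_map_sub hσcp]
        simp only [mul_sub, sub_mul]
        abel
      have hErest : IsPositiveElem (star c * Lc - star c * σ (f k) * c - D k) := by
        rw [hEk]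
        exact isPos_conj (cp_map_pos hσcp (isPos_sq_sub (hf.pos k) (hf.norm_le_one k))) c
      have := isPos_norm_mono (hDpos k) hErest
      calc ‖D k‖ ≤ ‖star c * Lc - star c * σ (f k) * c‖ := this
        _ = ‖star c * (Lc - σ (f k) * c)‖ := by rw [mul_sub, mul_assoc]
        _ ≤ ‖star c‖ * ‖Lc - σ (f k) * c‖ := norm_mul_le _ _
        _ = ‖c‖ * ‖Lc - σ (f k) * c‖ := by rw [norm_star]
    have hDzero : Tendsto (fun k => ‖D k‖) atTop (𝓝 0) := by
      have h0 : Tendsto (fun k => ‖c‖ * ‖Lc - σ (f k) * c‖) atTop (𝓝 0) := by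
        have : Tendsto (fun k => Lc - σ (f k) * c) atTop (𝓝 0) := by
          have := hLc.const_sub Lc
          simpa using this
        simpa using (this.norm.const_mul ‖c‖)
      exact squeeze_zero (fun k => norm_nonneg _) hDnorm h0
    -- (F) Schwarz estimate
    have hxsub_bd : ∀ n m, ‖x n - x m‖ ≤ 2 * Mρ := by
      intro n m
      calc ‖x n - x m‖ ≤ ‖x n‖ + ‖x m‖ := norm_sub_le _ _
        _ ≤ Mρ + Mρ := add_le_add (hxbd n) (hxbd m)
        _ = 2 * Mρ := by ring
    have key : ∀ n m k, ‖σ ((x n - x m) - (x n - x m) * f k) * c‖ ^ 2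
        ≤ (Mσ * (2 * Mρ) ^ 2) * ‖D k‖ := by
      intro n m k
      set y := x n - x m with hy
      have hysa : IsSelfAdjoint y := ((isPos_selfAdjoint (hxpos n)).sub
        (isPos_selfAdjoint (hxpos m)))
      -- pointwise in l estimate
      have hptwise : ∀ l, ‖σ (y * (f l - f l * f k)) * c‖ ^ 2
          ≤ ‖σ (y * star y)‖ * ‖star c * σ (w k l) * c‖ := by
        intro l
        set vl := f l - f l * f k with hvl
        have hCS := cp_schwarz hσcp y vl c
        have hvv_pos : IsPositiveElem (star vl * vl) := ⟨vl, rfl⟩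
        have hdiff_pos : IsPositiveElem (w k l - star vl * vl) := by
          obtain ⟨g, hg⟩ := isPos_sq_sub (hf.pos l) (hf.norm_le_one l)
          refine ⟨g - g * f k, ?_⟩
          have hfk : star (f k) = f k := (hfsa k).star_eq
          have hfl : star (f l) = f l := (hfsa l).star_eq
          have e_rhs : star (g - g * f k) * (g - g * f k) =
              (star g * g) - (star g * g) * f k - f k * (star g * g)
                + f k * ((star g * g) * f k) := by
            simp only [star_sub, star_mul, hfk]
            noncomm_ring
          have e_lhs : w k l - star vl * vl =
              (f l - f l * f l) - (f l - f l * f l) * f k - f k * (f l - f l * f l)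
                + f k * ((f l - f l * f l) * f k) := by
            rw [hw, hvl]
            simp only [star_sub, star_mul, hfk, hfl]
            noncomm_ring
          rw [e_lhs, hg, e_rhs]
        have hmono : ‖star c * σ (star vl * vl) * c‖ ≤ ‖star c * σ (w k l) * c‖ := by
          refine isPos_norm_mono (isPos_conj (cp_map_pos hσcp hvv_pos) c) ?_
          have : star c * σ (w k l) * c - star c * σ (star vl * vl) * c
              = star c * σ (w k l - star vl * vl) * c := by
            rw [cp_map_sub hσcp]
            simp only [mul_sub, sub_mul]
          rw [this]
          exact isPos_conj (cp_map_pos hσcp hdiff_pos) c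
        calc ‖σ (y * vl) * c‖ ^ 2
            ≤ ‖σ (y * star y)‖ * ‖star c * σ (star vl * vl) * c‖ := hCS
          _ ≤ ‖σ (y * star y)‖ * ‖star c * σ (w k l) * c‖ :=
              mul_le_mul_of_nonneg_left hmono (norm_nonneg _)
      -- take the limit in l
      have hLHS : Tendsto (fun l => ‖σ (y * (f l - f l * f k)) * c‖ ^ 2) atTop
          (𝓝 (‖σ (y - y * f k) * c‖ ^ 2)) := by
        have hyv : Tendsto (fun l => y * (f l - f l * f k)) atTop (𝓝 (y - y * f k)) := by
          have h1 : Tendsto (fun l => y * f l) atTop (𝓝 y) := hf.tendsto_mul_right y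
          have h2 : Tendsto (fun l => (y * f l) * f k) atTop (𝓝 (y * f k)) := h1.mul_const _
          have : ∀ l, y * (f l - f l * f k) = y * f l - (y * f l) * f k := by
            intro l; rw [mul_sub, mul_assoc]
          simp only [this]
          exact h1.sub h2
        exact (((cp_tendsto hσcp hMσ hyv).mul_const c).norm).pow 2
      have hRHS : Tendsto (fun l => ‖σ (y * star y)‖ * ‖star c * σ (w k l) * c‖) atTop
          (𝓝 (‖σ (y * star y)‖ * ‖D k‖)) :=
        ((hconvD k).norm).const_mul _
      have hlim := le_of_tendsto_of_tendsto' hLHS hRHS hptwise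
      have hfactor : ‖σ (y * star y)‖ ≤ Mσ * (2 * Mρ) ^ 2 := by
        calc ‖σ (y * star y)‖ ≤ Mσ * ‖y * star y‖ := hMσ _
          _ ≤ Mσ * (‖y‖ * ‖star y‖) := mul_le_mul_of_nonneg_left (norm_mul_le _ _)
              (le_of_lt hMσpos)
          _ ≤ Mσ * ((2 * Mρ) * (2 * Mρ)) := by
              have h1 := hxsub_bd n m
              have h2 : ‖star y‖ ≤ 2 * Mρ := by rw [norm_star]; exact h1
              have hnn : (0:ℝ) ≤ 2 * Mρ := by positivity
              refine mul_le_mul_of_nonneg_left ?_ (le_of_lt hMσpos)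
              exact mul_le_mul h1 h2 (norm_nonneg _) hnn
          _ = Mσ * (2 * Mρ) ^ 2 := by ring
      calc ‖σ (y - y * f k) * c‖ ^ 2 ≤ ‖σ (y * star y)‖ * ‖D k‖ := hlim
        _ ≤ (Mσ * (2 * Mρ) ^ 2) * ‖D k‖ :=
            mul_le_mul_of_nonneg_right hfactor (norm_nonneg _)
    -- (G) assemble
    rw [Metric.cauchySeq_iff]
    intro ε hε
    have hεhalf : (0:ℝ) < (ε / 2) ^ 2 := by positivity
    have hDconst : Tendsto (fun k => (Mσ * (2 * Mρ) ^ 2) * ‖D k‖) atTop (𝓝 0) := by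
      simpa using hDzero.const_mul (Mσ * (2 * Mρ) ^ 2)
    obtain ⟨k, hk⟩ := (hDconst.eventually_lt_const hεhalf).exists
    set δ := ε / (2 * Mσ * (‖c‖ + 1)) with hδ
    have hδpos : 0 < δ := by positivity
    obtain ⟨N, hN⟩ := Metric.cauchySeq_iff.mp (hecau (f k)).1 δ hδpos
    refine ⟨N, fun n hn m hm => ?_⟩
    have hyfk : ‖(x n - x m) * f k‖ < δ := by
      have := hN n hn m hm
      rw [dist_eq_norm] at this
      rw [sub_mul]
      exact this
    set y := x n - x m with hy
    have hsplit : σ (x n) * c - σ (x m) * c = σ (y * f k) * c + σ (y - y * f k) * c := by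
      have h1 : σ (x n) * c - σ (x m) * c = σ y * c := by
        rw [hy, cp_map_sub hσcp, sub_mul]
      have h2 : σ y = σ (y * f k) + σ (y - y * f k) := by
        rw [← hσcp.map_add]
        congr 1
        abel
      rw [h1, h2, add_mul]
    have hterm1 : ‖σ (y * f k) * c‖ < ε / 2 := by
      calc ‖σ (y * f k) * c‖ ≤ ‖σ (y * f k)‖ * ‖c‖ := norm_mul_le _ _
        _ ≤ (Mσ * ‖y * f k‖) * ‖c‖ :=
            mul_le_mul_of_nonneg_right (hMσ _) (norm_nonneg _)
        _ < (Mσ * δ) * (‖c‖ + 1) := by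
            have hstep1 : ‖y * f k‖ * ‖c‖ ≤ ‖y * f k‖ * (‖c‖ + 1) :=
              mul_le_mul_of_nonneg_left (by linarith) (norm_nonneg _)
            have hstep2 : ‖y * f k‖ * (‖c‖ + 1) < δ * (‖c‖ + 1) :=
              mul_lt_mul_of_pos_right hyfk (by positivity)
            calc (Mσ * ‖y * f k‖) * ‖c‖ = Mσ * (‖y * f k‖ * ‖c‖) := by ring
              _ ≤ Mσ * (‖y * f k‖ * (‖c‖ + 1)) :=
                  mul_le_mul_of_nonneg_left hstep1 (le_of_lt hMσpos)
              _ < Mσ * (δ * (‖c‖ + 1)) := by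
                  exact mul_lt_mul_of_pos_left hstep2 hMσpos
              _ = (Mσ * δ) * (‖c‖ + 1) := by ring
        _ = ε / 2 := by
            rw [hδ]
            have hne1 : Mσ ≠ 0 := ne_of_gt hMσpos
            have hne2 : ‖c‖ + 1 ≠ 0 := by positivity
            field_simp
    have hterm2 : ‖σ (y - y * f k) * c‖ < ε / 2 := by
      have := key n m k
      have hlt : ‖σ (y - y * f k) * c‖ ^ 2 < (ε / 2) ^ 2 := lt_of_le_of_lt this hk
      exact lt_of_pow_lt_pow_left₀ 2 (by positivity) hlt
    rw [dist_eq_norm, hsplit]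
    calc ‖σ (y * f k) * c + σ (y - y * f k) * c‖
        ≤ ‖σ (y * f k) * c‖ + ‖σ (y - y * f k) * c‖ := norm_add_le _ _
      _ < ε / 2 + ε / 2 := add_lt_add hterm1 hterm2
      _ = ε := by ring
  refine ⟨e, he, fun c => ⟨main c, ?_⟩⟩
  have h2 : (fun n => c * (σ ∘ ρ) (e n)) = fun n => star (σ (x n) * star c) := by
    funext n
    have hsa : IsSelfAdjoint (σ (x n)) := isPos_selfAdjoint (cp_map_pos hσcp (hxpos n))
    rw [star_mul, star_star, hsa.star_eq]
    rfl
  rw [h2]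
  exact star_isometry.uniformContinuous.comp_cauchySeq (main (star c))
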